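/- Fix integers K, N, a, b with m = a*N − b*K > 0 and let σ ∈ DPT(K,N,a,b). Then for every y ∈ ℤ the set {x ∈ ℤ : σ(x,y) ≥ 1} has a minimum, so 𝓛(σ)(y) := min{x : σ(x,y) ≥ 1} is well defined; the function 𝓛 = 𝓛(σ) is a (K,N)-periodic lattice path (weakly decreasing with 𝓛(y+N) = 𝓛(y) − K for all y); it satisfies 𝓛 < 𝓛[a,b]; and Δ'(σ) = Δ'(𝓛), i.e. for all (x,y) ∈ ℤ² one has 1 ≤ σ(x,y) ≤ m if and only if 𝓛(y) ≤ x < 𝓛(y+b) + a. -/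

import Mathlib

/-- A standard doubly periodic tableau with respect to `(K, N, a, b)`. -/
def IsDPT (K N a b : ℤ) (σ : ℤ × ℤ → ℤ) : Prop :=
  Function.Surjective σ ∧
  (∀ x y : ℤ, σ (x + K, y - N) = σ (x, y)) ∧
  (∀ x y : ℤ, σ (x + a, y - b) = σ (x, y) + (a * N - b * K)) ∧
  (∀ x y : ℤ, σ (x, y) < σ (x + 1, y)) ∧
  (∀ x y : ℤ, σ (x, y) < σ (x, y + 1))

/-- A `(K,N)`-periodic lattice path. -/
def IsLP (K N : ℤ) (L : ℤ → ℤ) : Prop :=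
  Antitone L ∧ ∀ y : ℤ, L (y + N) = L y - K

/-- The shifted path `L[a,b] : y ↦ L(y+b) + a`. -/
def LPshift (a b : ℤ) (L : ℤ → ℤ) : ℤ → ℤ := fun y => L (y + b) + a

lemma int_strictMono_le {f : ℤ → ℤ} (hf : StrictMono f) (x0 : ℤ) :
    ∀ x, x0 ≤ x → f x0 + (x - x0) ≤ f x := by
  have key : ∀ n : ℕ, f x0 + (n : ℤ) ≤ f (x0 + (n : ℤ)) := by
    intro n
    induction n with
    | zero => simp
    | succ k ih =>
        have h1 : f (x0 + (k : ℤ)) < f (x0 + ((k + 1 : ℕ) : ℤ)) :=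
          hf (by push_cast; omega)
        push_cast at h1 ⊢
        omega
  intro x hx
  obtain ⟨n, rfl⟩ := Int.le.dest hx
  have := key n
  omega

/-- For `σ ∈ DPT(K,N,a,b)`: each set `{x : σ(x,y) ≥ 1}` has a minimum `L y`;
the resulting function `L = 𝓛(σ)` is a `(K,N)`-periodic lattice path with
`L < L[a,b]`, and `Δ'(σ) = Δ'(L)`, i.e. `1 ≤ σ(x,y) ≤ m` iff `L y ≤ x < L(y+b) + a`. -/
theorem dpt_lattice_path (K N a b : ℤ) (hm : 0 < a * N - b * K)
    (σ : ℤ × ℤ → ℤ) (hσ : IsDPT K N a b σ) :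
    ∃ L : ℤ → ℤ,
      (∀ y : ℤ, IsLeast {x : ℤ | 1 ≤ σ (x, y)} (L y)) ∧
      IsLP K N L ∧
      (∀ y : ℤ, L y ≤ LPshift a b L y) ∧ L ≠ LPshift a b L ∧
      (∀ x y : ℤ, (1 ≤ σ (x, y) ∧ σ (x, y) ≤ a * N - b * K) ↔
        (L y ≤ x ∧ x < LPshift a b L y)) := by
  obtain ⟨hsurj, hKN, hab, hx1, hy1⟩ := hσ
  have hfx : ∀ y : ℤ, StrictMono (fun t => σ (t, y)) := fun y =>
    strictMono_int_of_lt_succ (fun t => hx1 t y)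
  have hfy : ∀ x : ℤ, StrictMono (fun t => σ (x, t)) := fun x =>
    strictMono_int_of_lt_succ (fun t => hy1 x t)
  -- existence of least element in each row
  have hleast : ∀ y : ℤ, ∃ l, IsLeast {x : ℤ | 1 ≤ σ (x, y)} l := by
    intro y
    have hne : ∃ z : ℤ, 1 ≤ σ (z, y) := by
      refine ⟨max 0 (1 - σ (0, y)), ?_⟩
      have h0 : (0 : ℤ) ≤ max 0 (1 - σ (0, y)) := le_max_left _ _
      have := int_strictMono_le (hfx y) 0 _ h0
      have h1 : 1 - σ (0, y) ≤ max 0 (1 - σ (0, y)) := le_max_right _ _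
      omega
    have hbdd : ∃ B : ℤ, ∀ z : ℤ, 1 ≤ σ (z, y) → B ≤ z := by
      refine ⟨min 0 (-σ (0, y)) + 1, ?_⟩
      intro z hz
      set s := min 0 (-σ (0, y)) with hs
      have hs0 : s ≤ 0 := min_le_left _ _
      have := int_strictMono_le (hfx y) s 0 hs0
      by_contra hc
      have hzs : z ≤ s := by omega
      have := (hfx y).monotone hzs
      have hs2 : s ≤ -σ (0, y) := min_le_right _ _
      omega
    obtain ⟨lb, hlb1, hlb2⟩ := Int.exists_least_of_bdd hbdd hne
    exact ⟨lb, hlb1, fun z hz => hlb2 z hz⟩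
  set L : ℤ → ℤ := fun y => (hleast y).choose with hLdef
  have hL : ∀ y : ℤ, IsLeast {x : ℤ | 1 ≤ σ (x, y)} (L y) := fun y =>
    (hleast y).choose_spec
  -- key equivalence 1
  have hiff1 : ∀ x y : ℤ, 1 ≤ σ (x, y) ↔ L y ≤ x := by
    intro x y
    constructor
    · exact fun h => (hL y).2 h
    · intro h
      have h1 : (1 : ℤ) ≤ σ (L y, y) := (hL y).1
      have h2 := (hfx y).monotone h
      omega
  -- horizontal/vertical rewriting lemmas
  have hm' : ∀ x y : ℤ, σ (x, y) = σ (x - a, y + b) + (a * N - b * K) := by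
    intro x y
    have := hab (x - a) (y + b)
    simp only [sub_add_cancel, add_sub_cancel_right] at this
    omega
  have hiff2 : ∀ x y : ℤ, σ (x, y) ≤ a * N - b * K ↔ x < L (y + b) + a := by
    intro x y
    have h1 := hm' x y
    have h2 := hiff1 (x - a) (y + b)
    constructor
    · intro h
      by_contra hc
      have : L (y + b) ≤ x - a := by omega
      have := h2.2 this
      omega
    · intro h
      by_contra hc
      have : 1 ≤ σ (x - a, y + b) := by omega
      have := h2.1 this
      omega
  have hmain : ∀ x y : ℤ, (1 ≤ σ (x, y) ∧ σ (x, y) ≤ a * N - b * K) ↔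
      (L y ≤ x ∧ x < LPshift a b L y) := by
    intro x y
    simp only [LPshift]
    exact and_congr (hiff1 x y) (hiff2 x y)
  refine ⟨L, hL, ⟨?_, ?_⟩, ?_, ?_, hmain⟩
  · -- Antitone
    intro y y' h
    apply (hL y').2
    show 1 ≤ σ (L y, y')
    have h1 : (1 : ℤ) ≤ σ (L y, y) := (hL y).1
    have h2 := (hfy (L y)).monotone h
    omega
  · -- periodicity
    intro y
    have hrow : ∀ x : ℤ, σ (x, y + N) = σ (x + K, y) := by
      intro x
      have := hKN x (y + N)
      simpa using this.symm
    have h1 : L (y + N) ≤ L y - K := by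
      apply (hL (y + N)).2
      show 1 ≤ σ (L y - K, y + N)
      rw [hrow]
      have : L y ≤ L y - K + K := by omega
      exact (hiff1 _ y).2 this
    have h2 : L y ≤ L (y + N) + K := by
      have : (1 : ℤ) ≤ σ (L (y + N), y + N) := (hL (y + N)).1
      rw [hrow] at this
      exact (hiff1 _ y).1 this
    omega
  · -- L ≤ shift
    intro y
    show L y ≤ L (y + b) + a
    apply (hiff1 _ _).1
    have h1 := hm' (L (y + b) + a) y
    simp only [add_sub_cancel_right] at h1
    have h2 : (1 : ℤ) ≤ σ (L (y + b), y + b) := (hL (y + b)).1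
    omega
  · -- strictness
    intro heq
    obtain ⟨⟨x, y⟩, hxy⟩ := hsurj 1
    have h1 : 1 ≤ σ (x, y) ∧ σ (x, y) ≤ a * N - b * K := by rw [hxy]; omega
    have h2 := (hmain x y).1 h1
    have h3 := congrFun heq y
    simp only [LPshift] at h2 h3
    omega
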